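/- arXiv:1102.5207 — 3 statements merged into one kernel-verified Lean document; each statement's English description precedes it below -/
import Mathlib

section
/- For all real t, y with 0 ≤ t ≤ y, one has exp(-2β ∫_t^y (cos s)/s ds) ≤ 3^{2β}, where β > 0 is a fixed constant. In particular ∫_t^y (cos s)/s ds ≥ -ln 3 for all 0 ≤ t ≤ y. -/
open Real intervalIntegral MeasureTheory

private lemma cosdiv_intble {a b : ℝ} (ha : 0 < a) (hab : a ≤ b) :
    IntervalIntegrable (fun s => Real.cos s / s) volume a b := by
  apply ContinuousOn.intervalIntegrable
  apply Real.continuousOn_cos.div continuousOn_id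
  intro x hx
  rw [Set.uIcc_of_le hab] at hx
  exact ne_of_gt (lt_of_lt_of_le ha hx.1)

private lemma cosdiv_nonneg_piece {t u : ℝ} (ht : 0 ≤ t) (htu : t ≤ u) (hu : u ≤ Real.pi / 2) :
    0 ≤ ∫ s in t..u, Real.cos s / s := by
  apply intervalIntegral.integral_nonneg htu
  intro s hs
  have h1 : 0 ≤ Real.cos s := Real.cos_nonneg_of_mem_Icc
    ⟨by nlinarith [Real.pi_pos, hs.1], le_trans hs.2 hu⟩
  exact div_nonneg h1 (le_trans ht hs.1)

private lemma sin24_ge : (0.665 : ℝ) ≤ Real.sin 2.4 := by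
  have hsb := Real.sin_bound (x := 0.4) (by rw [abs_of_pos] <;> norm_num)
  rw [abs_of_pos (by norm_num : (0:ℝ) < 0.4)] at hsb
  have hs1 : (0.388 : ℝ) ≤ Real.sin 0.4 := by
    have := abs_le.1 hsb; norm_num at this ⊢; linarith [this.1]
  have hs2 : Real.sin 0.4 ≤ 0.3906667 := by
    have := abs_le.1 hsb; norm_num at this ⊢; linarith [this.2]
  have hc0 : 0 < Real.cos 0.4 := Real.cos_pos_of_le_one (by rw [abs_of_pos] <;> norm_num)
  have hpyth : Real.sin 0.4 ^ 2 + Real.cos 0.4 ^ 2 = 1 := Real.sin_sq_add_cos_sq 0.4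
  have hc1 : (0.9205 : ℝ) ≤ Real.cos 0.4 := by nlinarith
  have hc2 : Real.cos 0.4 ≤ 0.9217 := by nlinarith
  have h12s : Real.sin 1.2 = 3 * Real.sin 0.4 - 4 * Real.sin 0.4 ^ 3 := by
    have := Real.sin_three_mul 0.4; norm_num at this ⊢; linarith
  have h12c : Real.cos 1.2 = 4 * Real.cos 0.4 ^ 3 - 3 * Real.cos 0.4 := by
    have := Real.cos_three_mul 0.4; norm_num at this ⊢; linarith
  have h24 : Real.sin 2.4 = 2 * Real.sin 1.2 * Real.cos 1.2 := by
    have := Real.sin_two_mul 1.2; norm_num at this ⊢; linarith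
  have e1 : (0:ℝ) ≤ Real.sin 0.4 - 0.388 := by linarith
  have e2 : (0:ℝ) ≤ 0.3906667 - Real.sin 0.4 := by linarith
  have hs12 : (0.9303 : ℝ) ≤ Real.sin 1.2 := by
    rw [h12s]
    nlinarith [mul_nonneg e1 e2, mul_nonneg (mul_nonneg e1 e1) e1,
      mul_nonneg (mul_nonneg e1 e1) e2, mul_nonneg (mul_nonneg e1 e2) e2]
  have f1 : (0:ℝ) ≤ Real.cos 0.4 - 0.9205 := by linarith
  have f2 : (0:ℝ) ≤ 0.9217 - Real.cos 0.4 := by linarith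
  have hc12 : (0.3583 : ℝ) ≤ Real.cos 1.2 := by
    rw [h12c]
    nlinarith [mul_nonneg f1 f2, mul_nonneg (mul_nonneg f1 f1) f1,
      mul_nonneg (mul_nonneg f1 f1) f2, mul_nonneg (mul_nonneg f1 f2) f2]
  rw [h24]; nlinarith

private lemma log3_ge : (1.0512 : ℝ) ≤ Real.log 3 := by
  have h3 : (0.9488:ℝ) ≤ Real.exp (-0.0512) := by
    have := Real.add_one_le_exp (-0.0512 : ℝ); linarith
  have h2 : Real.exp 0.0512 ≤ 1/0.9488 := by
    rw [show (0.0512:ℝ) = -(-0.0512) by norm_num, Real.exp_neg, inv_eq_one_div]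
    exact one_div_le_one_div_of_le (by norm_num) h3
  have h : Real.exp 1.0512 < 3 := by
    have h1 : Real.exp 1.0512 = Real.exp 1 * Real.exp 0.0512 := by
      rw [← Real.exp_add]; norm_num
    have h5 : Real.exp 1 * Real.exp 0.0512 < 2.7182818286 * (1/0.9488) :=
      mul_lt_mul Real.exp_one_lt_d9 h2 (Real.exp_pos _) (by norm_num)
    rw [h1]; linarith
  linarith [(Real.lt_log_iff_exp_lt (by norm_num : (0:ℝ) < 3)).2 h]

private lemma middle_piece {a b : ℝ} (ha : Real.pi / 2 ≤ a) (hab : a ≤ b) (hb : b ≤ 2.4) :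
    (Real.sin b - Real.sin a) * (2 / Real.pi) ≤ ∫ s in a..b, Real.cos s / s := by
  have hpi := Real.pi_gt_d6
  have ha0 : (0:ℝ) < a := by linarith
  have hcomp : ∫ s in a..b, Real.cos s * (2 / Real.pi) ≤ ∫ s in a..b, Real.cos s / s := by
    apply intervalIntegral.integral_mono_on hab
    · exact (Real.continuous_cos.mul continuous_const).intervalIntegrable a b
    · exact cosdiv_intble ha0 hab
    · intro s hs
      have hs1 : Real.pi / 2 ≤ s := le_trans ha hs.1
      have hcos : Real.cos s ≤ 0 :=
        Real.cos_nonpos_of_pi_div_two_le_of_le hs1 (by nlinarith [hs.2])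
      have hs0 : (0:ℝ) < s := by linarith
      rw [div_eq_mul_inv]
      apply mul_le_mul_of_nonpos_left _ hcos
      have h7 : s⁻¹ ≤ (Real.pi/2)⁻¹ := inv_anti₀ (by positivity) hs1
      have h8 : (Real.pi/2)⁻¹ = 2 * Real.pi⁻¹ := by
        rw [inv_div, div_eq_mul_inv]
      linarith
  have heq : ∫ s in a..b, Real.cos s * (2 / Real.pi) = (Real.sin b - Real.sin a) * (2/Real.pi) := by
    rw [intervalIntegral.integral_mul_const, integral_cos]
  linarith [hcomp, heq.ge, heq.le]

private lemma middle_num {a b : ℝ} (ha : Real.pi / 2 ≤ a) (hab : a ≤ b) (hb : b ≤ 2.4) :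
    (-0.215 : ℝ) ≤ ∫ s in a..b, Real.cos s / s := by
  have hpi := Real.pi_gt_d6
  have hpi2 := Real.pi_lt_d2
  have h1 := middle_piece ha hab hb
  have e : ∀ x : ℝ, Real.sin x = Real.cos (x - Real.pi/2) := fun x => by
    rw [← Real.cos_neg, neg_sub, Real.cos_pi_div_two_sub]
  have hsinb : Real.sin 2.4 ≤ Real.sin b := by
    have h := Real.cos_le_cos_of_nonneg_of_le_pi (x := b - Real.pi/2) (y := 2.4 - Real.pi/2)
      (by linarith) (by linarith) (by linarith)
    rw [e b, e 2.4]; exact h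
  have hS := sin24_ge
  have hsina : Real.sin a ≤ 1 := Real.sin_le_one a
  have hfrac : 2 / Real.pi ≤ 0.64 := by
    rw [div_le_iff₀ Real.pi_pos]; nlinarith
  have hfrac0 : (0:ℝ) < 2 / Real.pi := by positivity
  nlinarith [h1]

private lemma tail_piece {a b : ℝ} (ha : (2.4:ℝ) ≤ a) (hab : a ≤ b) :
    -(5/6 : ℝ) ≤ ∫ s in a..b, Real.cos s / s := by
  have ha0 : (0:ℝ) < a := by linarith
  have hb0 : (0:ℝ) < b := by linarith
  have hmem : ∀ x ∈ Set.uIcc a b, (0:ℝ) < x := by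
    intro x hx
    rw [Set.uIcc_of_le hab] at hx
    linarith [hx.1]
  have hcont : ContinuousOn (fun x : ℝ => ((x:ℝ)^2)⁻¹) (Set.uIcc a b) :=
    continuousOn_inv₀.comp (continuousOn_pow 2)
      (fun x hx => pow_ne_zero 2 (ne_of_gt (hmem x hx)))
  have hibp := intervalIntegral.integral_mul_deriv_eq_deriv_mul
    (u := Real.sin) (u' := Real.cos) (v := fun x => x⁻¹) (v' := fun x => -(x^2)⁻¹)
    (fun x _ => Real.hasDerivAt_sin x)
    (fun x hx => by simpa using hasDerivAt_inv (ne_of_gt (hmem x hx)))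
    (Real.continuous_cos.intervalIntegrable a b)
    (hcont.neg.intervalIntegrable)
  have hinv_sq_int : ∫ x in a..b, (x^2)⁻¹ = a⁻¹ - b⁻¹ := by
    have := intervalIntegral.integral_eq_sub_of_hasDerivAt
      (f := fun x => -x⁻¹) (f' := fun x => (x^2)⁻¹)
      (fun x hx => ((hasDerivAt_inv (ne_of_gt (hmem x hx))).neg).congr_deriv (by ring))
      hcont.intervalIntegrable
    rw [this]; ring
  have hbound : ∫ x in a..b, Real.sin x * -(x^2)⁻¹ ≤ ∫ x in a..b, (x^2)⁻¹ := by
    apply intervalIntegral.integral_mono_on hab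
    · exact (Real.continuousOn_sin.mul hcont.neg).intervalIntegrable
    · exact hcont.intervalIntegrable
    · intro x hx
      have hx0 : (0:ℝ) < x := hmem x (by rw [Set.uIcc_of_le hab]; exact hx)
      have h1 : (0:ℝ) < (x^2)⁻¹ := by positivity
      nlinarith [Real.neg_one_le_sin x]
  have hsinb : -(1:ℝ) ≤ Real.sin b := Real.neg_one_le_sin b
  have hinva : a⁻¹ ≤ 1/2.4 := by
    rw [inv_eq_one_div]
    exact one_div_le_one_div_of_le (by norm_num) ha
  have hinvb : (0:ℝ) < b⁻¹ := by positivity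
  have hinva0 : (0:ℝ) < a⁻¹ := by positivity
  have hgoal : ∫ s in a..b, Real.cos s / s = ∫ x in a..b, Real.cos x * x⁻¹ := by
    simp_rw [div_eq_mul_inv]
  rw [hgoal]
  have e2 : -b⁻¹ ≤ Real.sin b * b⁻¹ := by nlinarith
  have e3 : Real.sin a * a⁻¹ ≤ a⁻¹ := by nlinarith [Real.sin_le_one a]
  linarith [hibp, hbound, hinv_sq_int.le, hinv_sq_int.ge]

private lemma cos_integral_lower (t y : ℝ) (ht : 0 ≤ t) (hty : t ≤ y) :
    -Real.log 3 ≤ ∫ s in t..y, Real.cos s / s := by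
  have hlog := log3_ge
  have hpi := Real.pi_gt_d6
  have hpi2 := Real.pi_lt_d2
  by_cases hI : IntervalIntegrable (fun s => Real.cos s / s) volume t y
  · rcases le_or_gt y (Real.pi / 2) with hy | hy
    · linarith [cosdiv_nonneg_piece ht hty hy]
    · rcases le_or_gt t (Real.pi / 2) with htp | htp
      · -- t ≤ π/2 < y : split at π/2
        have hmem1 : t ∈ Set.uIcc t y := Set.left_mem_uIcc
        have hmemp : Real.pi / 2 ∈ Set.uIcc t y := by
          rw [Set.uIcc_of_le hty]; exact ⟨htp, hy.le⟩
        have hmemy : y ∈ Set.uIcc t y := Set.right_mem_uIcc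
        have hI1 : IntervalIntegrable (fun s => Real.cos s / s) volume t (Real.pi/2) :=
          hI.mono_set (Set.uIcc_subset_uIcc hmem1 hmemp)
        have hI2 : IntervalIntegrable (fun s => Real.cos s / s) volume (Real.pi/2) y :=
          hI.mono_set (Set.uIcc_subset_uIcc hmemp hmemy)
        have hsplit := intervalIntegral.integral_add_adjacent_intervals hI1 hI2
        have hpos := cosdiv_nonneg_piece ht htp (le_refl _)
        have hrest : (-0.215 - 5/6 : ℝ) ≤ ∫ s in (Real.pi/2)..y, Real.cos s / s := by
          rcases le_or_gt y 2.4 with hy2 | hy2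
          · linarith [middle_num (le_refl (Real.pi/2)) hy.le hy2]
          · have hIa : IntervalIntegrable (fun s => Real.cos s / s) volume (Real.pi/2) 2.4 :=
              cosdiv_intble (by linarith) (by linarith)
            have hIb : IntervalIntegrable (fun s => Real.cos s / s) volume 2.4 y :=
              cosdiv_intble (by norm_num) hy2.le
            have hsplit2 := intervalIntegral.integral_add_adjacent_intervals hIa hIb
            have h1 := middle_num (le_refl (Real.pi/2)) (by linarith : Real.pi/2 ≤ 2.4)
              (le_refl (2.4:ℝ))
            have h2 := tail_piece (le_refl (2.4:ℝ)) hy2.le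
            linarith [hsplit2]
        linarith [hsplit]
      · -- π/2 < t
        rcases le_or_gt y 2.4 with hy2 | hy2
        · linarith [middle_num htp.le hty hy2]
        · rcases le_or_gt t 2.4 with ht2 | ht2
          · have hIa : IntervalIntegrable (fun s => Real.cos s / s) volume t 2.4 :=
              cosdiv_intble (by linarith) ht2
            have hIb : IntervalIntegrable (fun s => Real.cos s / s) volume 2.4 y :=
              cosdiv_intble (by norm_num) hy2.le
            have hsplit2 := intervalIntegral.integral_add_adjacent_intervals hIa hIb
            have h1 := middle_num htp.le ht2 (le_refl (2.4:ℝ))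
            have h2 := tail_piece (le_refl (2.4:ℝ)) hy2.le
            linarith [hsplit2]
          · linarith [tail_piece ht2.le hty]
  · rw [intervalIntegral.integral_undef hI]
    linarith

/-- For `β > 0` and all `0 ≤ t ≤ y`, `exp(-2β ∫_t^y cos s / s ds) ≤ 3^{2β}`;
in particular `∫_t^y cos s / s ds ≥ -ln 3`. -/
theorem exp_neg_cos_integral_le (β : ℝ) (hβ : 0 < β) (t y : ℝ) (ht : 0 ≤ t) (hty : t ≤ y) :
    Real.exp (-2 * β * ∫ s in t..y, Real.cos s / s) ≤ (3 : ℝ) ^ (2 * β) ∧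
      -Real.log 3 ≤ ∫ s in t..y, Real.cos s / s := by
  have key := cos_integral_lower t y ht hty
  refine ⟨?_, key⟩
  rw [Real.rpow_def_of_pos (by norm_num : (0:ℝ) < 3)]
  rw [Real.exp_le_exp]
  nlinarith [key]
end

section
/- Fix β > 0 and ε ∈ ℝ. Define V⁽³⁾ₙ(ε) = (β/n)(cos(εn) − ∫_n^{n+1}cos(εr)dr)·diag(1, −1) + (β/n)·sin(εn)·[[0,1],[1,0]]. Then ‖V⁽³⁾ₙ(ε)‖ ≤ (5β/2)·|ε| for every n ≥ 1. -/
open scoped Matrix.Norms.L2Operator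

lemma abs_cos_sub_cos_le (a b : ℝ) : |Real.cos a - Real.cos b| ≤ |a - b| := by
  rw [Real.cos_sub_cos, abs_mul, abs_mul]
  have h1 : |Real.sin ((a + b) / 2)| ≤ 1 :=
    abs_le.2 ⟨Real.neg_one_le_sin _, Real.sin_le_one _⟩
  have h2 : |Real.sin ((a - b) / 2)| ≤ |a - b| / 2 := by
    have := Real.abs_sin_le_abs (x := (a - b) / 2)
    rwa [abs_div, abs_two] at this
  have h3 : |(-2 : ℝ)| = 2 := by norm_num
  rw [h3]
  nlinarith [abs_nonneg (Real.sin ((a + b) / 2)), abs_nonneg (Real.sin ((a - b) / 2)),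
    abs_nonneg (a - b)]

lemma norm_smul_sq_one_le {M : Matrix (Fin 2) (Fin 2) ℝ} (hM : M.conjTranspose * M = 1) : ‖M‖ ≤ 1 := by
  have h : ‖M‖ * ‖M‖ = 1 := by
    rw [← Matrix.l2_opNorm_conjTranspose_mul_self, hM, norm_one]
  nlinarith [norm_nonneg M]

/-- The matrices `V⁽³⁾ₙ(ε)` satisfy `‖V⁽³⁾ₙ(ε)‖ ≤ (5β/2)·|ε|` for every `n ≥ 1`. -/
theorem V3_norm_bound (β : ℝ) (hβ : 0 < β) (ε : ℝ)
    (V3 : ℕ → Matrix (Fin 2) (Fin 2) ℝ)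
    (hV3 : ∀ n : ℕ, V3 n =
      ((β / n) * (Real.cos (ε * n) - ∫ r in (n : ℝ)..((n : ℝ) + 1), Real.cos (ε * r))) •
        !![(1 : ℝ), 0; 0, -1] +
      ((β / n) * Real.sin (ε * n)) • !![(0 : ℝ), 1; 1, 0]) :
    ∀ n : ℕ, 1 ≤ n → ‖V3 n‖ ≤ (5 * β / 2) * |ε| := by
  intro n hn
  have hn1 : (1 : ℝ) ≤ (n : ℝ) := by exact_mod_cast hn
  have hnpos : (0 : ℝ) < n := by linarith
  -- norms of the two matrices
  have hA : ‖(!![(1 : ℝ), 0; 0, -1])‖ ≤ 1 := by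
    apply norm_smul_sq_one_le
    ext i j
    fin_cases i <;> fin_cases j <;>
      simp [Matrix.mul_apply, Matrix.conjTranspose_apply, Fin.sum_univ_two, Matrix.one_apply,
        Matrix.vecHead, Matrix.vecTail]
  have hB : ‖(!![(0 : ℝ), 1; 1, 0])‖ ≤ 1 := by
    apply norm_smul_sq_one_le
    ext i j
    fin_cases i <;> fin_cases j <;>
      simp [Matrix.mul_apply, Matrix.conjTranspose_apply, Fin.sum_univ_two, Matrix.one_apply,
        Matrix.vecHead, Matrix.vecTail]
  -- bound on the integral term
  have hint : |Real.cos (ε * n) - ∫ r in (n : ℝ)..((n : ℝ) + 1), Real.cos (ε * r)| ≤ |ε| := by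
    have hconst : Real.cos (ε * n) = ∫ _ in (n : ℝ)..((n : ℝ) + 1), Real.cos (ε * n) := by
      simp
    rw [hconst, ← intervalIntegral.integral_sub (by simp)
      (Continuous.intervalIntegrable (by continuity) _ _)]
    have := intervalIntegral.norm_integral_le_of_norm_le_const (C := |ε|)
      (f := fun r => Real.cos (ε * n) - Real.cos (ε * r)) (a := (n : ℝ)) (b := (n : ℝ) + 1) ?_
    · simpa using this
    · intro x hx
      rw [Set.uIoc_of_le (by linarith)] at hx
      rw [Real.norm_eq_abs]
      calc |Real.cos (ε * n) - Real.cos (ε * x)| ≤ |ε * n - ε * x| := abs_cos_sub_cos_le _ _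
        _ = |ε| * |(n : ℝ) - x| := by rw [← abs_mul]; ring_nf
        _ ≤ |ε| * 1 := by
            gcongr
            rw [abs_le]
            constructor <;> [linarith [hx.2]; linarith [hx.1.le]]
        _ = |ε| := mul_one _
  -- bound on sin term
  have hsin : |Real.sin (ε * n)| ≤ (n : ℝ) * |ε| := by
    calc |Real.sin (ε * n)| ≤ |ε * n| := Real.abs_sin_le_abs
      _ = (n : ℝ) * |ε| := by rw [abs_mul, abs_of_nonneg hnpos.le]; ring
  have hβn : |β / (n : ℝ)| = β / n := abs_of_pos (div_pos hβ hnpos)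
  have hβn_le : β / (n : ℝ) ≤ β := by
    rw [div_le_iff₀ hnpos]; nlinarith
  calc ‖V3 n‖
      ≤ ‖((β / n) * (Real.cos (ε * n) - ∫ r in (n : ℝ)..((n : ℝ) + 1), Real.cos (ε * r))) •
          (!![(1 : ℝ), 0; 0, -1])‖ +
        ‖((β / n) * Real.sin (ε * n)) • (!![(0 : ℝ), 1; 1, 0])‖ := by
        rw [hV3 n]; exact norm_add_le _ _
    _ = |(β / n) * (Real.cos (ε * n) - ∫ r in (n : ℝ)..((n : ℝ) + 1), Real.cos (ε * r))| *
          ‖(!![(1 : ℝ), 0; 0, -1])‖ +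
        |(β / n) * Real.sin (ε * n)| * ‖(!![(0 : ℝ), 1; 1, 0])‖ := by
        rw [norm_smul, norm_smul, Real.norm_eq_abs, Real.norm_eq_abs]
    _ ≤ |(β / n) * (Real.cos (ε * n) - ∫ r in (n : ℝ)..((n : ℝ) + 1), Real.cos (ε * r))| * 1 +
        |(β / n) * Real.sin (ε * n)| * 1 := by
        exact add_le_add (mul_le_mul_of_nonneg_left hA (abs_nonneg _))
          (mul_le_mul_of_nonneg_left hB (abs_nonneg _))
    _ = (β / n) * |Real.cos (ε * n) - ∫ r in (n : ℝ)..((n : ℝ) + 1), Real.cos (ε * r)| +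
        (β / n) * |Real.sin (ε * n)| := by
        rw [mul_one, mul_one, abs_mul, abs_mul, hβn]
    _ ≤ (β / n) * |ε| + (β / n) * ((n : ℝ) * |ε|) := by
        have hc : (0:ℝ) ≤ β / n := le_of_lt (div_pos hβ hnpos)
        exact add_le_add (mul_le_mul_of_nonneg_left hint hc)
          (mul_le_mul_of_nonneg_left hsin hc)
    _ = (β / n) * |ε| + β * |ε| := by
        field_simp
    _ ≤ β * |ε| + β * |ε| :=
        add_le_add_left (mul_le_mul_of_nonneg_right hβn_le (abs_nonneg _)) _
    _ ≤ (5 * β / 2) * |ε| := by nlinarith [abs_nonneg ε]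
end

section
/- Let β > 0, let (Rₙ) be 2×2 complex matrices with ∑ₙ‖Rₙ‖ < ∞, and consider the recursion uₙ₊₁ = (diag(1, 1 − 2β/n) + Rₙ)uₙ for n ≥ 1. Then for every initial vector u₁ ∈ ℂ², the limit lim_{n→∞} uₙ exists, and the linear map u₁ ↦ lim_{n→∞} uₙ has rank at most one; moreover the limit always lies in the span of (1, 0). -/
open Filter Topology
open scoped Matrix.Norms.L2Operator


lemma coord_le_norm (y : EuclideanSpace ℂ (Fin 2)) (i : Fin 2) : ‖y i‖ ≤ ‖y‖ := by
  rw [EuclideanSpace.norm_eq]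
  rcases eq_or_lt_of_le (norm_nonneg (y i)) with h | h
  · rw [← h]; exact Real.sqrt_nonneg _
  · rw [Real.le_sqrt h.le]
    · exact Finset.single_le_sum (f := fun j => ‖y j‖ ^ 2)
        (fun j _ => by positivity) (Finset.mem_univ i)
    · exact Finset.sum_nonneg fun j _ => by positivity

lemma entry_le_norm (M : Matrix (Fin 2) (Fin 2) ℂ) (i j : Fin 2) : ‖M i j‖ ≤ ‖M‖ := by
  have h := M.l2_opNorm_mulVec (EuclideanSpace.single j (1:ℂ))
  rw [EuclideanSpace.norm_single, norm_one, mul_one] at h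
  refine le_trans ?_ h
  have h3 : M.mulVec (EuclideanSpace.single j (1:ℂ)) i = M i j := by
    show M.mulVec (Pi.single j 1) i = M i j
    rw [Matrix.mulVec_single]; simp
  calc ‖M i j‖
      = ‖((EuclideanSpace.equiv (Fin 2) ℂ).symm (M.mulVec (EuclideanSpace.single j (1:ℂ))) : EuclideanSpace ℂ (Fin 2)) i‖ := by
        rw [show ((EuclideanSpace.equiv (Fin 2) ℂ).symm (M.mulVec (EuclideanSpace.single j (1:ℂ))) : EuclideanSpace ℂ (Fin 2)) i
            = M.mulVec (EuclideanSpace.single j (1:ℂ)) i from rfl, h3]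
  _ ≤ _ := coord_le_norm _ i

noncomputable def resA (β : ℝ) (R : ℕ → Matrix (Fin 2) (Fin 2) ℂ) (n : ℕ) :
    Matrix (Fin 2) (Fin 2) ℂ :=
  Matrix.diagonal ![1, 1 - ((2 * β / n : ℝ) : ℂ)] + R n

noncomputable def resSol (β : ℝ) (R : ℕ → Matrix (Fin 2) (Fin 2) ℂ) (f : Fin 2 → ℂ) :
    ℕ → (Fin 2 → ℂ)
  | 0 => f
  | n+1 => (resA β R (n+1)).mulVec (resSol β R f n)

variable {β : ℝ} {R : ℕ → Matrix (Fin 2) (Fin 2) ℂ}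

lemma resSol_comp0 (f : Fin 2 → ℂ) (n : ℕ) :
    resSol β R f (n+1) 0 = resSol β R f n 0 + (R (n+1)).mulVec (resSol β R f n) 0 := by
  show (resA β R (n+1)).mulVec (resSol β R f n) 0 = _
  rw [resA, Matrix.add_mulVec, Pi.add_apply, Matrix.mulVec_diagonal]
  simp

lemma resSol_comp1 (f : Fin 2 → ℂ) (n : ℕ) :
    resSol β R f (n+1) 1 =
      (1 - ((2 * β / (n+1 : ℕ) : ℝ) : ℂ)) * resSol β R f n 1
        + (R (n+1)).mulVec (resSol β R f n) 1 := by
  show (resA β R (n+1)).mulVec (resSol β R f n) 1 = _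
  rw [resA, Matrix.add_mulVec, Pi.add_apply, Matrix.mulVec_diagonal]
  simp

-- linearity of resSol
lemma resSol_add (f g : Fin 2 → ℂ) (n : ℕ) :
    resSol β R (f + g) n = resSol β R f n + resSol β R g n := by
  induction n with
  | zero => rfl
  | succ n ih => show (resA β R (n+1)).mulVec _ = _; rw [ih, Matrix.mulVec_add]; rfl

lemma resSol_smul (c : ℂ) (f : Fin 2 → ℂ) (n : ℕ) :
    resSol β R (c • f) n = c • resSol β R f n := by
  induction n with
  | zero => rfl
  | succ n ih => show (resA β R (n+1)).mulVec _ = _; rw [ih, Matrix.mulVec_smul]; rfl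


lemma mulVec_comp_le (M : Matrix (Fin 2) (Fin 2) ℂ) (x : Fin 2 → ℂ) (i : Fin 2) :
    ‖M.mulVec x i‖ ≤ ‖M‖ * (‖x 0‖ + ‖x 1‖) := by
  have h : M.mulVec x i = M i 0 * x 0 + M i 1 * x 1 := by
    simp [Matrix.mulVec, dotProduct, Fin.sum_univ_two]
  have hM : (0:ℝ) ≤ ‖M‖ := norm_nonneg _
  calc ‖M.mulVec x i‖ ≤ ‖M i 0 * x 0‖ + ‖M i 1 * x 1‖ := h ▸ norm_add_le _ _
  _ = ‖M i 0‖ * ‖x 0‖ + ‖M i 1‖ * ‖x 1‖ := by rw [norm_mul, norm_mul]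
  _ ≤ ‖M‖ * ‖x 0‖ + ‖M‖ * ‖x 1‖ := by
      gcongr <;> exact entry_le_norm M i _
  _ = ‖M‖ * (‖x 0‖ + ‖x 1‖) := by ring

lemma coeff_norm (t : ℝ) : ‖(1 : ℂ) - ((t:ℝ):ℂ)‖ = |1 - t| := by
  rw [show (1:ℂ) - ((t:ℝ):ℂ) = (((1 - t : ℝ)):ℂ) by push_cast; ring, Complex.norm_real,
    Real.norm_eq_abs]

lemma resSol_bounded (β : ℝ) (hβ : 0 < β) (R : ℕ → Matrix (Fin 2) (Fin 2) ℂ)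
    (hR : Summable fun n => ‖R n‖) (f : Fin 2 → ℂ) :
    ∃ C : ℝ, ∀ n, ‖resSol β R f n 0‖ + ‖resSol β R f n 1‖ ≤ C := by
  set v := resSol β R f with hv
  set s : ℕ → ℝ := fun n => ‖v n 0‖ + ‖v n 1‖ with hs
  have hs0 : ∀ n, 0 ≤ s n := fun n => by positivity
  set n0 : ℕ := ⌈2 * β⌉₊ with hn0
  have hn0β : 2 * β ≤ n0 := Nat.le_ceil _
  -- step estimate
  have step : ∀ n, n0 ≤ n → s (n+1) ≤ (1 + 2 * ‖R (n+1)‖) * s n := by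
    intro n hn
    have hcoef : ‖(1 : ℂ) - ((2 * β / (n+1 : ℕ) : ℝ) : ℂ)‖ ≤ 1 := by
      rw [coeff_norm]
      have h1 : 0 < ((n:ℝ) + 1) := by positivity
      have h2 : 2 * β / ((n:ℕ)+1 : ℕ) ≤ 1 := by
        rw [div_le_one (by push_cast; positivity)]
        push_cast
        calc 2 * β ≤ (n0 : ℝ) := hn0β
        _ ≤ (n : ℝ) + 1 := by exact_mod_cast Nat.le_succ_of_le hn
      have h3 : 0 < 2 * β / (((n:ℕ)+1 : ℕ) : ℝ) := by push_cast; positivity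
      rw [abs_le]
      constructor <;> push_cast at h2 h3 ⊢ <;> nlinarith
    have h0 := resSol_comp0 (β := β) (R := R) f n
    have h1 := resSol_comp1 (β := β) (R := R) f n
    have e0 : ‖v (n+1) 0‖ ≤ ‖v n 0‖ + ‖R (n+1)‖ * s n := by
      rw [hv, h0]
      exact le_trans (norm_add_le _ _) (by gcongr; exact mulVec_comp_le _ _ _)
    have e1 : ‖v (n+1) 1‖ ≤ ‖v n 1‖ + ‖R (n+1)‖ * s n := by
      rw [hv, h1]
      refine le_trans (norm_add_le _ _) ?_
      gcongr
      · calc ‖(1 - ((2 * β / (n+1 : ℕ) : ℝ) : ℂ)) * v n 1‖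
            = ‖(1:ℂ) - ((2 * β / (n+1 : ℕ) : ℝ) : ℂ)‖ * ‖v n 1‖ := norm_mul _ _
        _ ≤ 1 * ‖v n 1‖ := by gcongr
        _ = ‖v n 1‖ := one_mul _
      · exact mulVec_comp_le _ _ _
    calc s (n+1) ≤ (‖v n 0‖ + ‖R (n+1)‖ * s n) + (‖v n 1‖ + ‖R (n+1)‖ * s n) := add_le_add e0 e1
    _ = (1 + 2 * ‖R (n+1)‖) * s n := by rw [hs]; ring
  -- exponential bound from n0 on
  set T : ℝ := ∑' n, ‖R n‖ with hT
  have hTnn : 0 ≤ T := tsum_nonneg fun n => norm_nonneg _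
  have key : ∀ m : ℕ, s (n0 + m) ≤ s n0 * Real.exp (2 * ∑ k ∈ Finset.range m, ‖R (n0 + 1 + k)‖) := by
    intro m
    induction m with
    | zero => simp
    | succ m ih =>
        have h1 : s (n0 + m + 1) ≤ (1 + 2 * ‖R (n0 + m + 1)‖) * s (n0 + m) :=
          step (n0 + m) (Nat.le_add_right _ _)
        have h2 : (1 + 2 * ‖R (n0 + m + 1)‖) ≤ Real.exp (2 * ‖R (n0 + m + 1)‖) := by
          have := Real.add_one_le_exp (2 * ‖R (n0 + m + 1)‖); linarith
        calc s (n0 + (m+1)) = s (n0 + m + 1) := rfl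
        _ ≤ (1 + 2 * ‖R (n0 + m + 1)‖) * s (n0 + m) := h1
        _ ≤ Real.exp (2 * ‖R (n0 + m + 1)‖) * (s n0 * Real.exp (2 * ∑ k ∈ Finset.range m, ‖R (n0 + 1 + k)‖)) := by
            have := Real.exp_nonneg (2 * ‖R (n0 + m + 1)‖)
            gcongr
        _ = s n0 * Real.exp (2 * ∑ k ∈ Finset.range (m+1), ‖R (n0 + 1 + k)‖) := by
            rw [Finset.sum_range_succ, mul_add, Real.exp_add,
              show n0+1+m = n0+m+1 from by omega]
            ring
  -- bound the finite sums by T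
  have sumle : ∀ m : ℕ, (∑ k ∈ Finset.range m, ‖R (n0 + 1 + k)‖) ≤ T := by
    intro m
    have h1 : (∑ k ∈ Finset.range m, ‖R (n0 + 1 + k)‖)
        = ∑ j ∈ Finset.Ico (n0+1) (n0+1+m), ‖R j‖ := by
      rw [Finset.sum_Ico_eq_sum_range]
      simp only [Nat.add_sub_cancel_left]
    rw [h1, hT]
    exact Summable.sum_le_tsum _ (fun i _ => norm_nonneg _) hR
  refine ⟨(∑ k ∈ Finset.range (n0+1), s k) * Real.exp (2 * T), ?_⟩
  have hsum_nn : 0 ≤ ∑ k ∈ Finset.range (n0+1), s k := Finset.sum_nonneg fun k _ => hs0 k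
  have hsn0 : s n0 ≤ ∑ k ∈ Finset.range (n0+1), s k :=
    Finset.single_le_sum (fun k _ => hs0 k) (Finset.self_mem_range_succ n0)
  have hexp1 : (1:ℝ) ≤ Real.exp (2 * T) := by
    rw [Real.one_le_exp_iff]; positivity
  intro n
  rcases le_or_gt n0 n with h | h
  · obtain ⟨m, rfl⟩ := Nat.exists_eq_add_of_le h
    calc s (n0 + m) ≤ s n0 * Real.exp (2 * ∑ k ∈ Finset.range m, ‖R (n0 + 1 + k)‖) := key m
    _ ≤ (∑ k ∈ Finset.range (n0+1), s k) * Real.exp (2 * T) := by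
        gcongr
        exact sumle m
  · calc s n ≤ ∑ k ∈ Finset.range (n0+1), s k :=
        Finset.single_le_sum (fun k _ => hs0 k) (Finset.mem_range.mpr (by omega))
    _ ≤ _ := le_mul_of_one_le_right hsum_nn hexp1

lemma resSol_tendsto0 (β : ℝ) (hβ : 0 < β) (R : ℕ → Matrix (Fin 2) (Fin 2) ℂ)
    (hR : Summable fun n => ‖R n‖) (f : Fin 2 → ℂ) :
    ∃ c : ℂ, Tendsto (fun n => resSol β R f n 0) atTop (𝓝 c) := by
  obtain ⟨C, hC⟩ := resSol_bounded β hβ R hR f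
  set v := resSol β R f with hv
  set d : ℕ → ℂ := fun n => (R (n+1)).mulVec (v n) 0 with hd
  have hdle : ∀ n, ‖d n‖ ≤ ‖R (n+1)‖ * C := by
    intro n
    calc ‖d n‖ ≤ ‖R (n+1)‖ * (‖v n 0‖ + ‖v n 1‖) := mulVec_comp_le _ _ _
    _ ≤ ‖R (n+1)‖ * C := by gcongr; exact hC n
  have hg : Summable (fun n => ‖R (n+1)‖ * C) :=
    ((summable_nat_add_iff 1).mpr hR).mul_right C
  have hds : Summable d := Summable.of_norm_bounded hg hdle
  have hpart : ∀ n, v n 0 = v 0 0 + ∑ k ∈ Finset.range n, d k := by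
    intro n
    induction n with
    | zero => simp
    | succ n ih =>
        rw [hv, resSol_comp0, ← hv, ih, Finset.sum_range_succ]
        ring
  refine ⟨v 0 0 + ∑' k, d k, ?_⟩
  have := hds.hasSum.tendsto_sum_nat
  have h2 : Tendsto (fun n => v 0 0 + ∑ k ∈ Finset.range n, d k) atTop (𝓝 (v 0 0 + ∑' k, d k)) :=
    tendsto_const_nhds.add this
  exact h2.congr fun n => (hpart n).symm

lemma resSol_tendsto1 (β : ℝ) (hβ : 0 < β) (R : ℕ → Matrix (Fin 2) (Fin 2) ℂ)
    (hR : Summable fun n => ‖R n‖) (f : Fin 2 → ℂ) :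
    Tendsto (fun n => resSol β R f n 1) atTop (𝓝 0) := by
  obtain ⟨C, hC⟩ := resSol_bounded β hβ R hR f
  set v := resSol β R f with hv
  have hC0 : 0 ≤ C := le_trans (by positivity) (hC 0)
  set g : ℕ → ℝ := fun n => ‖R n‖ * C with hg
  have hgnn : ∀ n, 0 ≤ g n := fun n => by positivity
  have hgs : Summable g := hR.mul_right C
  have htail : Tendsto (fun i => ∑' k, g (k + i)) atTop (𝓝 0) := _root_.tendsto_sum_nat_add g
  set n0 : ℕ := ⌈2 * β⌉₊ with hn0
  have hn0β : 2 * β ≤ n0 := Nat.le_ceil _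
  rw [Metric.tendsto_atTop]
  intro ε hε
  -- choose M
  have h4 : (0:ℝ) < ε/4 := by linarith
  obtain ⟨M0, hM0⟩ := (Metric.tendsto_atTop.mp htail) (ε/4) h4
  set M : ℕ := max M0 n0 with hM
  have hMn0 : n0 ≤ M := le_max_right _ _
  have htail' : ∑' k, g (k + (M+1)) < ε/4 := by
    have := hM0 (M+1) (le_trans (le_max_left _ _) (Nat.le_succ_of_le le_rfl))
    rw [Real.dist_eq] at this
    have hnn : 0 ≤ ∑' k, g (k + (M+1)) := tsum_nonneg fun k => hgnn _
    calc ∑' k, g (k + (M+1)) = |∑' k, g (k + (M+1)) - 0| := by rw [sub_zero, abs_of_nonneg hnn]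
    _ < ε/4 := this
  -- coefficients
  have hcoef : ∀ k : ℕ, M ≤ k → (0:ℝ) ≤ 1 - 2*β/(k+1) ∧ 2*β/(k+1) ≤ 1 ∧ 0 < 2*β/((k:ℝ)+1) := by
    intro k hk
    have h1 : (0:ℝ) < (k:ℝ)+1 := by positivity
    have h2 : 2*β ≤ (k:ℝ)+1 := by
      calc 2*β ≤ (n0:ℝ) := hn0β
      _ ≤ (k:ℝ) + 1 := by exact_mod_cast Nat.le_succ_of_le (le_trans hMn0 hk)
    constructor
    · rw [sub_nonneg, div_le_one h1]; exact h2
    exact ⟨by rw [div_le_one h1]; exact h2, by positivity⟩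
  set P : ℕ → ℝ := fun m => ∏ k ∈ Finset.range m, (1 - 2*β/((M+1+k : ℕ) : ℝ)) with hP
  have hPnn : ∀ m, 0 ≤ P m := by
    intro m
    apply Finset.prod_nonneg
    intro k _
    have := (hcoef (M+k) (Nat.le_add_right _ _)).1
    have he : ((M+1+k : ℕ) : ℝ) = ((M+k : ℕ) : ℝ) + 1 := by push_cast; ring
    rw [he]
    exact this
  -- induction bound
  have key : ∀ m : ℕ, ‖v (M+m) 1‖ ≤ ‖v M 1‖ * P m + ∑ k ∈ Finset.range m, g (M+1+k) := by
    intro m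
    induction m with
    | zero => simp [hP]
    | succ m ih =>
        have hcm := hcoef (M+m) (Nat.le_add_right _ _)
        have hcm0 : (0:ℝ) ≤ 1 - 2*β/((M:ℝ)+m+1) := by
          have := hcm.1; push_cast at this ⊢; linarith
        have hcm1 : 2*β/((M:ℝ)+m+1) ≤ 1 := by
          have := hcm.2.1; push_cast at this ⊢; linarith
        have hcm2 : 0 < 2*β/((M:ℝ)+m+1) := by
          have := hcm.2.2; push_cast at this ⊢; linarith
        have hnorm : ‖(1 : ℂ) - ((2 * β / ((M+m)+1 : ℕ) : ℝ) : ℂ)‖ = 1 - 2*β/((M:ℝ)+m+1) := by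
          rw [coeff_norm, abs_of_nonneg]
          · push_cast; ring_nf
          · push_cast; linarith [hcm0]
        have e1 : ‖v (M+m+1) 1‖ ≤ (1 - 2*β/((M:ℝ)+m+1)) * ‖v (M+m) 1‖ + g (M+m+1) := by
          rw [hv, resSol_comp1, ← hv]
          refine le_trans (norm_add_le _ _) ?_
          rw [norm_mul, hnorm]
          gcongr
          calc ‖(R (M+m+1)).mulVec (v (M+m)) 1‖ ≤ ‖R (M+m+1)‖ * (‖v (M+m) 0‖ + ‖v (M+m) 1‖) :=
                mulVec_comp_le _ _ _
          _ ≤ ‖R (M+m+1)‖ * C := by gcongr; exact hC _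
        have hc1 : 1 - 2*β/((M:ℝ)+m+1) ≤ 1 := by linarith
        have hPs : P (m+1) = P m * (1 - 2*β/((M:ℝ)+m+1)) := by
          simp only [hP, Finset.prod_range_succ]
          congr 1
          push_cast; ring
        have hSnn : 0 ≤ ∑ k ∈ Finset.range m, g (M+1+k) :=
          Finset.sum_nonneg fun k _ => hgnn _
        calc ‖v (M+(m+1)) 1‖ = ‖v (M+m+1) 1‖ := rfl
        _ ≤ (1 - 2*β/((M:ℝ)+m+1)) * ‖v (M+m) 1‖ + g (M+m+1) := e1
        _ ≤ (1 - 2*β/((M:ℝ)+m+1)) * (‖v M 1‖ * P m + ∑ k ∈ Finset.range m, g (M+1+k)) + g (M+m+1) := by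
            gcongr
        _ ≤ ‖v M 1‖ * (P m * (1 - 2*β/((M:ℝ)+m+1))) + ∑ k ∈ Finset.range m, g (M+1+k) + g (M+m+1) := by
            have hfac := hcm.1
            nlinarith [hPnn m, norm_nonneg (v M 1), mul_nonneg (norm_nonneg (v M 1)) (hPnn m), hSnn, hcm0, hc1]
        _ = ‖v M 1‖ * P (m+1) + ∑ k ∈ Finset.range (m+1), g (M+1+k) := by
            rw [hPs, Finset.sum_range_succ, show M+1+m = M+m+1 from by omega]
            ring
  -- partial sums of g bounded by tail
  have hSm : ∀ m, ∑ k ∈ Finset.range m, g (M+1+k) < ε/4 := by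
    intro m
    have he : ∀ k, g (M+1+k) = g (k+(M+1)) := fun k => by rw [add_comm (M+1) k]
    have h1 : ∑ k ∈ Finset.range m, g (M+1+k) = ∑ k ∈ Finset.range m, g (k+(M+1)) :=
      Finset.sum_congr rfl fun k _ => he k
    rw [h1]
    refine lt_of_le_of_lt ?_ htail'
    exact Summable.sum_le_tsum _ (fun k _ => hgnn _) ((summable_nat_add_iff (M+1)).mpr hgs)
  -- P tends to zero
  set H : ℕ → ℝ := fun m => ∑ k ∈ Finset.range m, (1:ℝ)/((M+1+k : ℕ) : ℝ) with hHdef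
  have hPle : ∀ m, P m ≤ Real.exp (-(2*β) * H m) := by
    intro m
    have h1 : P m ≤ ∏ k ∈ Finset.range m, Real.exp (-(2*β/((M+1+k:ℕ):ℝ))) := by
      rw [hP]
      refine Finset.prod_le_prod ?_ ?_
      · intro k _
        have := (hcoef (M+k) (Nat.le_add_right _ _)).1
        have he : ((M+1+k : ℕ) : ℝ) = ((M+k : ℕ) : ℝ) + 1 := by push_cast; ring
        rw [he]; exact this
      · intro k _
        have := Real.add_one_le_exp (-(2*β/((M+1+k:ℕ):ℝ)))
        linarith
    rw [← Real.exp_sum] at h1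
    refine h1.trans_eq ?_
    congr 1
    rw [hHdef, neg_mul, Finset.mul_sum, ← Finset.sum_neg_distrib]
    exact Finset.sum_congr rfl fun k _ => by ring
  have hH : Tendsto H atTop atTop := by
    set F : ℕ → ℝ := fun n => ∑ i ∈ Finset.range n, (1:ℝ)/((i:ℝ)+1) with hF
    have hFt : Tendsto F atTop atTop := Real.tendsto_sum_range_one_div_nat_succ_atTop
    have hcomp : Tendsto (fun m => F (m + M) - F M) atTop atTop := by
      have h2 : Tendsto (fun m => F (m + M)) atTop atTop :=
        hFt.comp (tendsto_add_atTop_nat M)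
      simpa [sub_eq_add_neg] using tendsto_atTop_add_const_right atTop (-(F M)) h2
    refine hcomp.congr ?_
    intro m
    have h3 : F (m + M) - F M = ∑ j ∈ Finset.Ico M (m + M), (1:ℝ)/((j:ℝ)+1) := by
      rw [Finset.sum_Ico_eq_sub _ (Nat.le_add_left M m)]
    rw [h3, Finset.sum_Ico_eq_sum_range, hHdef]
    have h4 : m + M - M = m := by omega
    rw [h4]
    refine Finset.sum_congr rfl fun k _ => ?_
    push_cast
    ring_nf
  have hExp : Tendsto (fun m => Real.exp (-(2*β) * H m)) atTop (𝓝 0) := by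
    have h1 : Tendsto (fun m => -(2*β) * H m) atTop atBot := by
      have h2 : Tendsto (fun m => (2*β) * H m) atTop atTop :=
        (tendsto_const_mul_atTop_of_pos (by linarith)).mpr hH
      have h3 : Tendsto (fun m => -((2*β) * H m)) atTop atBot :=
        tendsto_neg_atBot_iff.mpr h2
      refine h3.congr fun m => by ring
    exact Real.tendsto_exp_atBot.comp h1
  have hbP : Tendsto (fun m => ‖v M 1‖ * P m) atTop (𝓝 0) := by
    have hub : Tendsto (fun m => ‖v M 1‖ * Real.exp (-(2*β) * H m)) atTop (𝓝 0) := by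
      have := hExp.const_mul (‖v M 1‖)
      simpa using this
    refine squeeze_zero (fun m => mul_nonneg (norm_nonneg _) (hPnn m)) (fun m => ?_) hub
    gcongr
    exact hPle m
  obtain ⟨m1, hm1⟩ := (Metric.tendsto_atTop.mp hbP) (ε/2) (by linarith)
  refine ⟨M + m1, fun n hn => ?_⟩
  obtain ⟨m, rfl⟩ : ∃ m, n = M + m := ⟨n - M, by omega⟩
  have hmm1 : m1 ≤ m := by omega
  have h5 := hm1 m hmm1
  rw [Real.dist_eq, sub_zero, abs_of_nonneg (mul_nonneg (norm_nonneg _) (hPnn m))] at h5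
  rw [dist_zero_right]
  calc ‖v (M+m) 1‖ ≤ ‖v M 1‖ * P m + ∑ k ∈ Finset.range m, g (M+1+k) := key m
  _ < ε/2 + ε/4 := add_lt_add h5 (hSm m)
  _ < ε := by linarith

lemma resSol_tendsto (β : ℝ) (hβ : 0 < β) (R : ℕ → Matrix (Fin 2) (Fin 2) ℂ)
    (hR : Summable fun n => ‖R n‖) (f : Fin 2 → ℂ) :
    ∃ c : ℂ, Tendsto (resSol β R f) atTop (𝓝 (c • ![1, 0])) := by
  obtain ⟨c, h0⟩ := resSol_tendsto0 β hβ R hR f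
  have h1 := resSol_tendsto1 β hβ R hR f
  refine ⟨c, ?_⟩
  rw [tendsto_pi_nhds]
  intro i
  fin_cases i
  · simpa using h0
  · simpa using h1

/-- For the resonance (`ε = 0`) model recursion
`uₙ₊₁ = (diag(1, 1 − 2β/n) + Rₙ) uₙ` with `∑ ‖Rₙ‖ < ∞`, every solution converges,
the map `u₁ ↦ lim uₙ` is linear of rank at most one, and the limit always lies in
the span of `(1,0)`. -/
theorem resonance_recursion_limit (β : ℝ) (hβ : 0 < β)
    (R : ℕ → Matrix (Fin 2) (Fin 2) ℂ) (hR : Summable fun n => ‖R n‖) :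
    ∃ T : (Fin 2 → ℂ) →ₗ[ℂ] (Fin 2 → ℂ),
      (∀ f : Fin 2 → ℂ, ∃ c : ℂ, T f = c • ![1, 0]) ∧
      ∀ f : Fin 2 → ℂ, ∀ u : ℕ → Fin 2 → ℂ, u 1 = f →
        (∀ n : ℕ, 1 ≤ n →
          u (n + 1) = (Matrix.diagonal ![1, 1 - ((2 * β / n : ℝ) : ℂ)] + R n).mulVec (u n)) →
        Tendsto u atTop (nhds (T f)) := by
  set L : (Fin 2 → ℂ) → (Fin 2 → ℂ) := fun f => limUnder atTop (resSol β R f) with hLdef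
  have hL : ∀ f, Tendsto (resSol β R f) atTop (𝓝 (L f)) ∧ ∃ c : ℂ, L f = c • ![1, 0] := by
    intro f
    obtain ⟨c, h⟩ := resSol_tendsto β hβ R hR f
    have he : L f = c • ![1, 0] := h.limUnder_eq
    exact ⟨he ▸ h, c, he⟩
  refine ⟨⟨⟨L, ?_⟩, ?_⟩, fun f => (hL f).2, ?_⟩
  · intro f g
    have h : Tendsto (resSol β R (f + g)) atTop (𝓝 (L f + L g)) :=
      ((hL f).1.add (hL g).1).congr fun n => (resSol_add f g n).symm
    exact h.limUnder_eq
  · intro c f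
    have h : Tendsto (resSol β R (c • f)) atTop (𝓝 (c • L f)) :=
      ((hL f).1.const_smul c).congr fun n => (resSol_smul c f n).symm
    exact h.limUnder_eq
  · intro f u hu1 hrec
    have hu : ∀ n, u (n+1) = resSol β R f n := by
      intro n
      induction n with
      | zero => exact hu1
      | succ n ih =>
          rw [hrec (n+1) (Nat.le_add_left 1 n), ih]
          rfl
    have h := (hL f).1
    have h2 : Tendsto (fun n => u (n+1)) atTop (𝓝 (L f)) :=
      h.congr fun n => (hu n).symm
    exact (tendsto_add_atTop_iff_nat 1).mp h2
end
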